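/- Let λ ∈ ℂ with Im λ > 0 and let ξ > 0 satisfy 2|λ| ≤ ξ. Then ξ · ∫_0^π log |(ξe^{it} − conj(λ))/(ξe^{it} − λ)| dt ≤ 4π|λ|. -/

import Mathlib

theorem blaschke_factor_integral_small_zero (lam : ℂ) (hlam : 0 < lam.im)
    (ξ : ℝ) (hξ : 0 < ξ) (h : 2 * ‖lam‖ ≤ ξ) :
    ξ * ∫ t in (0:ℝ)..Real.pi, Real.log (‖((ξ : ℂ) * Complex.exp (Complex.I * t) - starRingEnd ℂ lam) /
          ((ξ : ℂ) * Complex.exp (Complex.I * t) - lam)‖)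
      ≤ 4 * Real.pi * ‖lam‖ := by
  have hlam0 : lam ≠ 0 := fun h0 => by simp [h0] at hlam
  have ha0 : 0 < ‖lam‖ := norm_pos_iff.mpr hlam0
  have habs : ∀ t : ℝ, ‖(ξ:ℂ) * Complex.exp (Complex.I * t)‖ = ξ := by
    intro t
    rw [norm_mul, Complex.norm_exp]
    simp [abs_of_pos hξ]
  have hconj : ‖starRingEnd ℂ lam‖ = ‖lam‖ := by
    simp
  have hden : ∀ (t : ℝ) (z : ℂ), ‖z‖ = ‖lam‖ →
      ξ/2 ≤ ‖(ξ:ℂ) * Complex.exp (Complex.I * t) - z‖ := by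
    intro t z hz
    have h1 : ‖(ξ:ℂ) * Complex.exp (Complex.I * t)‖ - ‖z‖ ≤
        ‖(ξ:ℂ) * Complex.exp (Complex.I * t) - z‖ := norm_sub_norm_le _ _
    simp only [habs t, hz] at h1
    linarith
  -- pointwise bound
  have hpt : ∀ t : ℝ, Real.log (‖((ξ : ℂ) * Complex.exp (Complex.I * t) - starRingEnd ℂ lam) /
          ((ξ : ℂ) * Complex.exp (Complex.I * t) - lam)‖) ≤ 4 * ‖lam‖ / ξ := by
    intro t
    set x := (ξ:ℂ) * Complex.exp (Complex.I * t) with hx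
    have hd : ξ/2 ≤ ‖x - lam‖ := hden t lam rfl
    have hn : ξ/2 ≤ ‖x - starRingEnd ℂ lam‖ := hden t _ hconj
    have hdpos : 0 < ‖x - lam‖ := lt_of_lt_of_le (by linarith) hd
    have hnpos : 0 < ‖x - starRingEnd ℂ lam‖ := lt_of_lt_of_le (by linarith) hn
    have hdiff : ‖x - starRingEnd ℂ lam‖ - ‖x - lam‖
        ≤ 2 * ‖lam‖ := by
      have h1 : ‖x - starRingEnd ℂ lam‖ - ‖x - lam‖ ≤ ‖(x - starRingEnd ℂ lam) - (x - lam)‖ :=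
        norm_sub_norm_le _ _
      have h2 : (x - starRingEnd ℂ lam) - (x - lam) = lam - starRingEnd ℂ lam := by ring
      rw [h2] at h1
      have h3 : ‖lam - starRingEnd ℂ lam‖ ≤ 2 * ‖lam‖ := by
        calc ‖lam - starRingEnd ℂ lam‖
            ≤ ‖lam‖ + ‖starRingEnd ℂ lam‖ := by
              simpa using norm_sub_le lam (starRingEnd ℂ lam)
          _ = 2 * ‖lam‖ := by rw [hconj]; ring
      linarith
    rw [norm_div]
    have hrpos : 0 < ‖x - starRingEnd ℂ lam‖ / ‖x - lam‖ :=
      div_pos hnpos hdpos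
    calc Real.log (‖x - starRingEnd ℂ lam‖ / ‖x - lam‖)
        ≤ ‖x - starRingEnd ℂ lam‖ / ‖x - lam‖ - 1 :=
          Real.log_le_sub_one_of_pos hrpos
      _ = (‖x - starRingEnd ℂ lam‖ - ‖x - lam‖) /
            ‖x - lam‖ := by field_simp
      _ ≤ (2 * ‖lam‖) / (ξ/2) := by
          exact div_le_div₀ (by positivity) hdiff (by linarith) hd
      _ = 4 * ‖lam‖ / ξ := by field_simp; ring
  -- integrability
  have hcont : ContinuousOn (fun t : ℝ => Real.log (‖((ξ : ℂ) * Complex.exp (Complex.I * t) - starRingEnd ℂ lam) /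
          ((ξ : ℂ) * Complex.exp (Complex.I * t) - lam)‖)) (Set.uIcc 0 Real.pi) := by
    apply ContinuousOn.log
    · apply Continuous.continuousOn
      apply continuous_norm.comp
      apply Continuous.div
      · exact (continuous_const.mul (Complex.continuous_exp.comp
          (continuous_const.mul Complex.continuous_ofReal))).sub continuous_const
      · exact (continuous_const.mul (Complex.continuous_exp.comp
          (continuous_const.mul Complex.continuous_ofReal))).sub continuous_const
      · intro t
        intro h0
        have := hden t lam rfl
        rw [h0] at this
        simp at this
        linarith
    · intro t _
      apply ne_of_gt
      rw [norm_div]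
      exact div_pos (lt_of_lt_of_le (by linarith) (hden t _ hconj))
        (lt_of_lt_of_le (by linarith) (hden t lam rfl))
  have hint : IntervalIntegrable (fun t : ℝ => Real.log (‖((ξ : ℂ) * Complex.exp (Complex.I * t) - starRingEnd ℂ lam) /
          ((ξ : ℂ) * Complex.exp (Complex.I * t) - lam)‖)) MeasureTheory.volume 0 Real.pi :=
    hcont.intervalIntegrable
  have hmono : (∫ t in (0:ℝ)..Real.pi, Real.log (‖((ξ : ℂ) * Complex.exp (Complex.I * t) - starRingEnd ℂ lam) /
          ((ξ : ℂ) * Complex.exp (Complex.I * t) - lam)‖))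
      ≤ ∫ _ in (0:ℝ)..Real.pi, 4 * ‖lam‖ / ξ := by
    apply intervalIntegral.integral_mono_on Real.pi_pos.le hint
      intervalIntegrable_const
    intro t _
    exact hpt t
  have hconst : (∫ _ in (0:ℝ)..Real.pi, 4 * ‖lam‖ / ξ)
      = Real.pi * (4 * ‖lam‖ / ξ) := by
    rw [intervalIntegral.integral_const]; simp [mul_comm, mul_div_assoc]
  rw [hconst] at hmono
  have := mul_le_mul_of_nonneg_left hmono hξ.le
  calc ξ * ∫ t in (0:ℝ)..Real.pi, Real.log (‖((ξ : ℂ) * Complex.exp (Complex.I * t) - starRingEnd ℂ lam) /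
          ((ξ : ℂ) * Complex.exp (Complex.I * t) - lam)‖)
      ≤ ξ * (Real.pi * (4 * ‖lam‖ / ξ)) := this
    _ = 4 * Real.pi * ‖lam‖ := by field_simp
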